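/- For all i ≥ 4, m ∈ {1,2,3} and j ∈ {1,2}, the chromatic index of H^{-i,3}_{m,j} equals i+1. -/

import Mathlib

/-- The integral sum graph on vertex set `{r, ..., s} ⊆ ℤ`:
distinct `u, v` are adjacent iff `u + v` also lies in `{r, ..., s}`. -/
def intervalSumGraph (r s : ℤ) : SimpleGraph ℤ where
  Adj u v := u ≠ v ∧ u ∈ Set.Icc r s ∧ v ∈ Set.Icc r s ∧ u + v ∈ Set.Icc r s
  symm := ⟨by
    rintro u v ⟨h1, h2, h3, h4⟩
    exact ⟨h1.symm, h3, h2, by rwa [add_comm]⟩⟩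
  loopless := ⟨fun u h => h.1 rfl⟩

/-- The graph `H^{-i,s}_{m,j}`: obtained from the integral sum graph `G_{-i,s}`
by deleting the vertices `-m` and `j` and all edges whose endpoint labels sum
to `-m` or to `j`. -/
def HGraph (i s m j : ℤ) : SimpleGraph ℤ where
  Adj u v := u ≠ v ∧ u ∈ Set.Icc (-i) s ∧ v ∈ Set.Icc (-i) s ∧ u + v ∈ Set.Icc (-i) s ∧
    u ≠ -m ∧ v ≠ -m ∧ u ≠ j ∧ v ≠ j ∧ u + v ≠ -m ∧ u + v ≠ j
  symm := ⟨by
    rintro u v ⟨h1, h2, h3, h4, h5, h6, h7, h8, h9, h10⟩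
    exact ⟨h1.symm, h3, h2, by rwa [add_comm], h6, h5, h8, h7,
      by rwa [add_comm], by rwa [add_comm]⟩⟩
  loopless := ⟨fun u h => h.1 rfl⟩

/-- The chromatic index of a graph: the least `n` such that there is a proper
edge coloring with `n` colors (distinct edges sharing a vertex get distinct colors). -/
noncomputable def chromaticIndex {V : Type*} (G : SimpleGraph V) : ℕ :=
  sInf {n : ℕ | ∃ c : Sym2 V → Fin n,
    ∀ e ∈ G.edgeSet, ∀ f ∈ G.edgeSet, e ≠ f → (∃ v, v ∈ e ∧ v ∈ f) → c e ≠ c f}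

/-- The sum of the two endpoint labels of an edge. -/
def edgeSum (e : Sym2 ℤ) : ℤ := Sym2.lift ⟨fun a b => a + b, fun a b => add_comm a b⟩ e

/-- The edge-sum chromatic number: the number of nonempty edge-sum color classes. -/
noncomputable def edgeSumChromatic (G : SimpleGraph ℤ) : ℕ :=
  {k : ℤ | ∃ e ∈ G.edgeSet, edgeSum e = k}.ncard

lemma hgraph_adj (i s m j u v : ℤ) : (HGraph i s m j).Adj u v ↔
    (u ≠ v ∧ (-i ≤ u ∧ u ≤ s) ∧ (-i ≤ v ∧ v ≤ s) ∧ (-i ≤ u + v ∧ u + v ≤ s) ∧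
    u ≠ -m ∧ v ≠ -m ∧ u ≠ j ∧ v ≠ j ∧ u + v ≠ -m ∧ u + v ≠ j) := Iff.rfl

/-- The modified sum coloring: the sum coloring with at most three edges recolored. -/
def scol (s1 d r2 t u v : ℤ) : ℤ :=
  if u + v = s1 then 0
  else if u + v = 0 ∧ (u = d ∨ v = d) then r2
  else if u + v = t ∧ (u = -3 ∨ v = -3) then 0
  else u + v

lemma scol_comm (s1 d r2 t u v : ℤ) : scol s1 d r2 t u v = scol s1 d r2 t v u := by
  unfold scol
  simp only [add_comm u v, or_comm (a := u = d), or_comm (a := u = -3)]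

/-- Rank function compressing `[-i,3] \ {a,b,c}` into `[0,i]`. -/
def g3 (i : ℕ) (a b c k : ℤ) : ℤ :=
  k + i - (if a < k then 1 else 0) - (if b < k then 1 else 0) - (if c < k then 1 else 0)

lemma g3_mem (i : ℕ) (hi : 4 ≤ i) (a b c k : ℤ) (ha : -3 ≤ a) (hab : a < b) (hbc : b < c)
    (hc3 : c ≤ 3) (hk : -(i:ℤ) ≤ k ∧ k ≤ 3 ∧ k ≠ a ∧ k ≠ b ∧ k ≠ c) :
    0 ≤ g3 i a b c k ∧ g3 i a b c k ≤ i := by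
  unfold g3; split_ifs <;> omega

lemma g3_ne (i : ℕ) (a b c k k' : ℤ) (ha : -3 ≤ a) (hab : a < b) (hbc : b < c)
    (hc3 : c ≤ 3) (hk : -(i:ℤ) ≤ k ∧ k ≤ 3 ∧ k ≠ a ∧ k ≠ b ∧ k ≠ c)
    (hk' : -(i:ℤ) ≤ k' ∧ k' ≤ 3 ∧ k' ≠ a ∧ k' ≠ b ∧ k' ≠ c) (hne : k ≠ k') :
    g3 i a b c k ≠ g3 i a b c k' := by
  unfold g3; split_ifs <;> omega

lemma proper_of_pointwise {α : Type*} (G : SimpleGraph ℤ) (c : Sym2 ℤ → α)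
    (h : ∀ u v w, G.Adj u v → G.Adj u w → v ≠ w → c s(u, v) ≠ c s(u, w)) :
    ∀ e ∈ G.edgeSet, ∀ f ∈ G.edgeSet, e ≠ f → (∃ v, v ∈ e ∧ v ∈ f) → c e ≠ c f := by
  intro e he f hf hef hx
  obtain ⟨x, hxe, hxf⟩ := hx
  rw [← Sym2.other_spec' hxe] at he hef ⊢
  rw [← Sym2.other_spec' hxf] at hf hef ⊢
  rw [SimpleGraph.mem_edgeSet] at he hf
  exact h x _ _ he hf (fun hb => hef (by rw [hb]))

lemma upper_mem (i : ℕ) (hi : 4 ≤ i) (m j a b c s1 d r2 t : ℤ)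
    (ha : -3 ≤ a) (hab : a < b) (hbc : b < c) (hc3 : c ≤ 3)
    (hbnd : ∀ u v : ℤ, (HGraph (i:ℤ) 3 m j).Adj u v →
      -(i:ℤ) ≤ scol s1 d r2 t u v ∧ scol s1 d r2 t u v ≤ 3 ∧
      scol s1 d r2 t u v ≠ a ∧ scol s1 d r2 t u v ≠ b ∧ scol s1 d r2 t u v ≠ c)
    (hnep : ∀ u v v' : ℤ, (HGraph (i:ℤ) 3 m j).Adj u v → (HGraph (i:ℤ) 3 m j).Adj u v' →
      v ≠ v' → scol s1 d r2 t u v ≠ scol s1 d r2 t u v') :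
    (i + 1) ∈ {n : ℕ | ∃ c' : Sym2 ℤ → Fin n,
      ∀ e ∈ (HGraph (i:ℤ) 3 m j).edgeSet, ∀ f ∈ (HGraph (i:ℤ) 3 m j).edgeSet,
        e ≠ f → (∃ v, v ∈ e ∧ v ∈ f) → c' e ≠ c' f} := by
  refine ⟨fun e => ⟨(g3 i a b c
      (Sym2.lift ⟨fun u v => scol s1 d r2 t u v, fun u v => scol_comm s1 d r2 t u v⟩ e)).toNat
        % (i + 1), Nat.mod_lt _ (by omega)⟩, ?_⟩
  apply proper_of_pointwise
  intro u v v' h1 h2 hvv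
  simp only [Sym2.lift_mk, ne_eq, Fin.mk.injEq]
  obtain ⟨b1, b2, b3, b4, b5⟩ := hbnd u v h1
  obtain ⟨c1, c2, c3, c4, c5⟩ := hbnd u v' h2
  have hne := hnep u v v' h1 h2 hvv
  have g1 := g3_mem i hi a b c _ ha hab hbc hc3 ⟨b1, b2, b3, b4, b5⟩
  have g2 := g3_mem i hi a b c _ ha hab hbc hc3 ⟨c1, c2, c3, c4, c5⟩
  have g12 := g3_ne i a b c _ _ ha hab hbc hc3 ⟨b1, b2, b3, b4, b5⟩ ⟨c1, c2, c3, c4, c5⟩ hne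
  intro hEq
  rw [Nat.mod_eq_of_lt (by omega), Nat.mod_eq_of_lt (by omega)] at hEq
  omega

lemma lower_bound (i : ℕ) (hi : 4 ≤ i) (m j : ℤ) (hm1 : 1 ≤ m) (hm3 : m ≤ 3)
    (hj : j = 1 ∨ j = 2) (n : ℕ)
    (hn : ∃ c : Sym2 ℤ → Fin n, ∀ e ∈ (HGraph (i:ℤ) 3 m j).edgeSet,
      ∀ f ∈ (HGraph (i:ℤ) 3 m j).edgeSet, e ≠ f → (∃ v, v ∈ e ∧ v ∈ f) → c e ≠ c f) :
    i + 1 ≤ n := by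
  obtain ⟨c, hc⟩ := hn
  set ν : ℕ → ℤ := fun t => if (t:ℤ) < i - m then -(i:ℤ) + t
    else if (t:ℤ) < i - 1 then -(i:ℤ) + t + 1
    else if (t:ℤ) = i - 1 then 3 - j else 3 with hν
  have hadj : ∀ t : ℕ, t < i + 1 → (HGraph (i:ℤ) 3 m j).Adj 0 (ν t) := by
    intro t ht
    rw [hgraph_adj]
    simp only [hν]
    split_ifs <;> omega
  have hinj : ∀ t t' : ℕ, t < i + 1 → t' < i + 1 → t ≠ t' → ν t ≠ ν t' := by
    intro t t' ht ht' hne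
    simp only [hν]
    split_ifs <;> omega
  have key : Function.Injective (fun t : Fin (i+1) => c s(0, ν t)) := by
    intro t t' h
    by_contra hne
    have htt : (t : ℕ) ≠ (t' : ℕ) := fun h' => hne (Fin.ext h')
    have h1 := hadj t t.isLt
    have h2 := hadj t' t'.isLt
    have hνne := hinj t t' t.isLt t'.isLt htt
    have hEdgeNe : s(0, ν t) ≠ s(0, ν t') := by
      rw [Ne, Sym2.eq_iff]
      rintro (⟨-, h'⟩ | ⟨h', -⟩)
      · exact hνne h'
      · exact h2.ne h'
    exact hc s(0, ν t) ((SimpleGraph.mem_edgeSet _).2 h1) s(0, ν t')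
      (((SimpleGraph.mem_edgeSet) _).2 h2) hEdgeNe ⟨0, by simp, by simp⟩ h
  have := Fintype.card_le_of_injective _ key
  simpa using this

set_option maxHeartbeats 1600000 in
theorem chromaticIndex_H_i_3_m_j (i : ℕ) (hi : 4 ≤ i) (m j : ℤ)
    (hm : m ∈ ({1, 2, 3} : Set ℤ)) (hj : j ∈ ({1, 2} : Set ℤ)) :
    chromaticIndex (HGraph (i : ℤ) 3 m j) = i + 1 := by
  simp only [Set.mem_insert_iff, Set.mem_singleton_iff] at hm hj
  have hupper : (i + 1) ∈ {n : ℕ | ∃ c' : Sym2 ℤ → Fin n,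
      ∀ e ∈ (HGraph (i:ℤ) 3 m j).edgeSet, ∀ f ∈ (HGraph (i:ℤ) 3 m j).edgeSet,
        e ≠ f → (∃ v, v ∈ e ∧ v ∈ f) → c' e ≠ c' f} := by
    have hiz : (4:ℤ) ≤ (i:ℤ) := by exact_mod_cast hi
    rcases hm with rfl | rfl | rfl <;> rcases hj with rfl | rfl
    · -- m = 1, j = 1 : scheme A
      exact upper_mem i hi 1 1 (-1) 1 3 3 3 2 5 (by norm_num) (by norm_num) (by norm_num)
        (by norm_num)
        (by intro u v h; rw [hgraph_adj] at h; unfold scol; split_ifs <;> omega)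
        (by intro u v v' h1 h2 hvv; rw [hgraph_adj] at h1 h2; unfold scol;
            split_ifs <;> omega)
    · -- m = 1, j = 2 : scheme U
      exact upper_mem i hi 1 2 (-1) 2 3 3 3 (-(i:ℤ)) (-(i:ℤ)) (by norm_num) (by norm_num)
        (by norm_num) (by norm_num)
        (by intro u v h; rw [hgraph_adj] at h; unfold scol; split_ifs <;> omega)
        (by intro u v v' h1 h2 hvv; rw [hgraph_adj] at h1 h2; unfold scol;
            split_ifs <;> omega)
    · -- m = 2, j = 1 : scheme U
      exact upper_mem i hi 2 1 (-2) 1 3 3 3 (-(i:ℤ)) (-(i:ℤ)) (by norm_num) (by norm_num)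
        (by norm_num) (by norm_num)
        (by intro u v h; rw [hgraph_adj] at h; unfold scol; split_ifs <;> omega)
        (by intro u v v' h1 h2 hvv; rw [hgraph_adj] at h1 h2; unfold scol;
            split_ifs <;> omega)
    · -- m = 2, j = 2 : scheme B
      exact upper_mem i hi 2 2 (-2) 1 2 1 1 3 5 (by norm_num) (by norm_num) (by norm_num)
        (by norm_num)
        (by intro u v h; rw [hgraph_adj] at h; unfold scol; split_ifs <;> omega)
        (by intro u v v' h1 h2 hvv; rw [hgraph_adj] at h1 h2; unfold scol;
            split_ifs <;> omega)
    · -- m = 3, j = 1 : scheme U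
      exact upper_mem i hi 3 1 (-3) 1 3 3 3 (-(i:ℤ)) (-(i:ℤ)) (by norm_num) (by norm_num)
        (by norm_num) (by norm_num)
        (by intro u v h; rw [hgraph_adj] at h; unfold scol; split_ifs <;> omega)
        (by intro u v v' h1 h2 hvv; rw [hgraph_adj] at h1 h2; unfold scol;
            split_ifs <;> omega)
    · -- m = 3, j = 2 : scheme U
      exact upper_mem i hi 3 2 (-3) 2 3 3 3 (-(i:ℤ)) (-(i:ℤ)) (by norm_num) (by norm_num)
        (by norm_num) (by norm_num)
        (by intro u v h; rw [hgraph_adj] at h; unfold scol; split_ifs <;> omega)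
        (by intro u v v' h1 h2 hvv; rw [hgraph_adj] at h1 h2; unfold scol;
            split_ifs <;> omega)
  refine le_antisymm (Nat.sInf_le hupper) (le_csInf ⟨_, hupper⟩ ?_)
  intro n hn
  exact lower_bound i hi m j (by omega) (by omega) (by omega) n hn
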